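/- Let y₁ be a solution of equation (2.1) on [t₀, τ₀), and let η : [t₀, τ₀) → ℝ be differentiable with η′(t) + a(t)η(t)³ + b(t)η(t)² + c(t)η(t) + d(t) ≤ 0 for all t ∈ [t₀, τ₀) and η(t₀) ≤ y₁(t₀). Assume: (I) a(t) < 0 for almost every t ∈ [t₀, τ₀) and b²/a is locally integrable on [t₀, τ₀); (II) there exists γ ∈ [η(t₀), y₁(t₀)] such that for all t ∈ [t₀, τ₀), γ − y₁(t₀) + ∫_{t₀}^{t} exp(∫_{t₀}^{τ} [c(s) − b(s)²/a(s)] ds)·[(a₁(τ) − a(τ))y₁(τ)³ + (b₁(τ) − b(τ))y₁(τ)² + (c₁(τ) − c(τ))y₁(τ) + d₁(τ) − d(τ)] dτ ≤ 0. Then every noncontinuable solution y of (1.1) with y(t₀) ∈ [η(t₀), γ] is defined on all of [t₀, τ₀) and satisfies η(t) ≤ y(t) ≤ y₁(t) for all t ∈ [t₀, τ₀). Furthermore, if η(t₀) < y(t₀) then η(t) < y(t) on [t₀, τ₀), and if y(t₀) < y₁(t₀) then y(t) < y₁(t) on [t₀, τ₀). -/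

import Mathlib

set_option maxHeartbeats 2000000

open Set MeasureTheory intervalIntegral

/-- The right-hand side `-(a y³ + b y² + c y + d)` of the Abel equation (1.1). -/
noncomputable def abelRHS (a b c d y : ℝ → ℝ) (t : ℝ) : ℝ :=
  -(a t * y t ^ 3 + b t * y t ^ 2 + c t * y t + d t)

/-- `y` is a solution of the Abel equation `y' + a y³ + b y² + c y + d = 0` on the set `S`. -/
def IsAbelSolOn (a b c d y : ℝ → ℝ) (S : Set ℝ) : Prop :=
  ∀ t ∈ S, HasDerivWithinAt y (abelRHS a b c d y t) S t

/-- The set of real points of the interval `[t₀, τ)`, `τ` an extended real. -/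
def eIco (t₀ : ℝ) (τ : EReal) : Set ℝ := {t : ℝ | t₀ ≤ t ∧ (t : EReal) < τ}

/-- A solution `y` of the Abel equation on `[t₀, t₁) ⊆ [t₀, τ₀)` is noncontinuable if it
cannot be extended to the right as a solution on a larger subinterval of `[t₀, τ₀)`. -/
def Noncontinuable (a b c d : ℝ → ℝ) (t₀ : ℝ) (τ₀ t₁ : EReal) (y : ℝ → ℝ) : Prop :=
  ¬ ∃ (t₂ : EReal) (z : ℝ → ℝ), t₁ < t₂ ∧ t₂ ≤ τ₀ ∧
      IsAbelSolOn a b c d z (eIco t₀ t₂) ∧ EqOn z y (eIco t₀ t₁)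

/-- antitone helper -/
lemma myAnti {F : ℝ → ℝ} {A B : ℝ}
    (hF : ContinuousOn F (Icc A B))
    (hd : ∀ t ∈ Ioo A B, ∃ d, d ≤ 0 ∧ HasDerivAt F d t) :
    ∀ t ∈ Icc A B, F t ≤ F A := by
  intro t ht
  have hAB : A ≤ B := le_trans ht.1 ht.2
  have h1 : AntitoneOn F (Icc A B) := by
    apply antitoneOn_of_deriv_nonpos (convex_Icc A B) hF
    · intro x hx
      rw [interior_Icc] at hx
      exact ((hd x hx).choose_spec.2).differentiableAt.differentiableWithinAt
    · intro x hx
      rw [interior_Icc] at hx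
      obtain ⟨v, hv, hD⟩ := hd x hx
      rw [hD.deriv]; exact hv
  exact h1 (left_mem_Icc.2 hAB) ht ht.1

/-- FTC helper -/
lemma myFTC {F g : ℝ → ℝ} {A B : ℝ}
    (hF : ContinuousOn F (Icc A B)) (hg : ContinuousOn g (Icc A B))
    (hd : ∀ t ∈ Ioo A B, HasDerivAt F (g t) t) :
    ∀ t ∈ Icc A B, F t = F A + ∫ τ in A..t, g τ := by
  intro t ht
  have h1 : ∫ τ in A..t, g τ = F t - F A := by
    apply intervalIntegral.integral_eq_sub_of_hasDeriv_right_of_le ht.1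
      (hF.mono (Icc_subset_Icc le_rfl ht.2))
    · intro x hx
      exact (hd x ⟨hx.1, lt_of_lt_of_le hx.2 ht.2⟩).hasDerivWithinAt
    · apply ContinuousOn.intervalIntegrable
      apply hg.mono
      rw [uIcc_of_le ht.1]
      exact Icc_subset_Icc le_rfl ht.2
  rw [h1]; ring

/-- algebra: q ≤ p when a < 0 -/
lemma myAlg1 {a b c u v : ℝ} (ha : a < 0) :
    a * (u ^ 2 + u * v + v ^ 2) + b * (u + v) + c ≤ c - b ^ 2 / a := by
  have key : a * (u ^ 2 + u * v + v ^ 2) + b * (u + v) + b ^ 2 / a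
      = (a ^ 2 * (u ^ 2 + u * v + v ^ 2) + a * b * (u + v) + b ^ 2) / a := by
    field_simp [ha.ne]
  have h2 : (0:ℝ) ≤ a ^ 2 * (u ^ 2 + u * v + v ^ 2) + a * b * (u + v) + b ^ 2 := by
    nlinarith [sq_nonneg (a*u + a*v + b), sq_nonneg (a*u), sq_nonneg (a*v), sq_nonneg b,
      sq_nonneg (a*u - a*v)]
  have h3 : a * (u ^ 2 + u * v + v ^ 2) + b * (u + v) + b ^ 2 / a ≤ 0 := by
    rw [key]
    exact div_nonpos_of_nonneg_of_nonpos h2 ha.le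
  linarith

/-- algebra: q < p when a < 0 and u ≠ v -/
lemma myAlg2 {a b c u v : ℝ} (ha : a < 0) (huv : u ≠ v) :
    a * (u ^ 2 + u * v + v ^ 2) + b * (u + v) + c < c - b ^ 2 / a := by
  have key : a * (u ^ 2 + u * v + v ^ 2) + b * (u + v) + b ^ 2 / a
      = (a ^ 2 * (u ^ 2 + u * v + v ^ 2) + a * b * (u + v) + b ^ 2) / a := by
    field_simp [ha.ne]
  have hne : a * u - a * v ≠ 0 := by
    intro h
    apply huv
    have : a * (u - v) = 0 := by linarith
    rcases mul_eq_zero.1 this with h' | h'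
    · exact absurd h' ha.ne
    · linarith
  have h2 : (0:ℝ) < a ^ 2 * (u ^ 2 + u * v + v ^ 2) + a * b * (u + v) + b ^ 2 := by
    nlinarith [sq_nonneg (3*(a*u + a*v) + 2*b), pow_pos (abs_pos.2 hne) 2, sq_abs (a*u - a*v),
      sq_nonneg (a*u - a*v)]
  have h3 : a * (u ^ 2 + u * v + v ^ 2) + b * (u + v) + b ^ 2 / a < 0 := by
    rw [key]
    exact div_neg_of_pos_of_neg h2 ha
  linarith


/-- Abel-summation type bound for ∫ h·g with h antitone nonneg. -/
lemma myKey {A B C : ℝ} {g h : ℝ → ℝ} (hAB : A ≤ B)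
    (hg : ContinuousOn g (Icc A B)) (hh : ContinuousOn h (Icc A B))
    (hanti : AntitoneOn h (Icc A B)) (hpos : ∀ t ∈ Icc A B, 0 ≤ h t)
    (hC : ∀ t ∈ Icc A B, (∫ τ in A..t, g τ) ≤ C) :
    (∫ τ in A..B, h τ * g τ) ≤ (h A - h B) * C + h B * ∫ τ in A..B, g τ := by
  rcases eq_or_lt_of_le hAB with rfl | hlt
  · simp
  apply le_of_forall_pos_le_add
  intro ε hε
  -- bound on g
  obtain ⟨Mg0, hMg0⟩ := isCompact_Icc.exists_bound_of_continuousOn hg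
  set Mg : ℝ := Mg0 + 1 with hMgdef
  have hMg : ∀ x ∈ Icc A B, |g x| ≤ Mg := fun x hx => by
    have := hMg0 x hx; rw [Real.norm_eq_abs] at this; simp only [hMgdef]; linarith
  have hMgpos : 0 < Mg := by
    have := hMg0 A (left_mem_Icc.2 hAB)
    rw [Real.norm_eq_abs] at this
    simp only [hMgdef]
    linarith [abs_nonneg (g A)]
  set ε' : ℝ := ε / (Mg * (B - A) + 1) with hε'def
  have hε'pos : 0 < ε' := div_pos hε (by nlinarith)
  -- uniform continuity of h
  have huc := isCompact_Icc.uniformContinuousOn_of_continuous hh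
  rw [Metric.uniformContinuousOn_iff] at huc
  obtain ⟨δ, hδpos, hδ⟩ := huc ε' hε'pos
  -- choose N
  obtain ⟨n, hn⟩ := exists_nat_gt ((B - A) / δ)
  set N : ℕ := n + 1 with hNdef
  have hNpos : (0:ℝ) < N := by positivity
  set Δ : ℝ := (B - A) / N with hΔdef
  have hΔpos : 0 < Δ := div_pos (by linarith) hNpos
  have hΔδ : Δ < δ := by
    rw [hΔdef, div_lt_iff₀ hNpos]
    have h1 : (B - A) / δ < N := lt_of_lt_of_le hn (by exact_mod_cast Nat.le_succ n)
    rw [div_lt_iff₀ hδpos] at h1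
    linarith
  set x : ℕ → ℝ := fun i => A + i * Δ with hxdef
  have hx0 : x 0 = A := by simp [hxdef]
  have hxN : x N = B := by
    simp only [hxdef, hΔdef]
    field_simp
    ring
  have hxmono : ∀ i j : ℕ, i ≤ j → x i ≤ x j := by
    intro i j hij
    simp only [hxdef]
    have : (i:ℝ) ≤ j := by exact_mod_cast hij
    nlinarith
  have hxsucc : ∀ i : ℕ, x (i+1) - x i = Δ := by
    intro i; simp only [hxdef]; push_cast; ring
  have hxmem : ∀ i : ℕ, i ≤ N → x i ∈ Icc A B := by
    intro i hi
    constructor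
    · rw [← hx0]; exact hxmono 0 i (Nat.zero_le _)
    · rw [← hxN]; exact hxmono i N hi
  set Φ : ℝ → ℝ := fun t => ∫ τ in A..t, g τ with hΦdef
  have hgint : ∀ u v : ℝ, u ∈ Icc A B → v ∈ Icc A B → IntervalIntegrable g volume u v := by
    intro u v hu hv
    apply ContinuousOn.intervalIntegrable
    exact hg.mono (uIcc_subset_Icc hu hv)
  have hhgint : ∀ u v : ℝ, u ∈ Icc A B → v ∈ Icc A B →
      IntervalIntegrable (fun τ => h τ * g τ) volume u v := by
    intro u v hu hv
    apply ContinuousOn.intervalIntegrable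
    exact (hh.mul hg).mono (uIcc_subset_Icc hu hv)
  have hΦdiff : ∀ i : ℕ, i < N → ∫ τ in x i..x (i+1), g τ = Φ (x (i+1)) - Φ (x i) := by
    intro i hi
    simp only [hΦdef]
    rw [← intervalIntegral.integral_interval_sub_left
      (hgint A (x (i+1)) (left_mem_Icc.2 hAB) (hxmem _ hi)) (hgint A (x i) (left_mem_Icc.2 hAB) (hxmem _ (le_of_lt hi)))]
  -- per piece bound
  have piece : ∀ i : ℕ, i < N →
      (∫ τ in x i..x (i+1), h τ * g τ) ≤ h (x (i+1)) * (Φ (x (i+1)) - Φ (x i)) + ε' * Mg * Δ := by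
    intro i hi
    have him : x i ∈ Icc A B := hxmem i hi.le
    have him' : x (i+1) ∈ Icc A B := hxmem (i+1) hi
    have h1 : (∫ τ in x i..x (i+1), h τ * g τ) - h (x (i+1)) * (Φ (x (i+1)) - Φ (x i))
        = ∫ τ in x i..x (i+1), (h τ - h (x (i+1))) * g τ := by
      rw [← hΦdiff i hi, ← intervalIntegral.integral_const_mul,
        ← intervalIntegral.integral_sub (hhgint _ _ him him')]
      · congr 1; ext τ; ring
      · exact (hgint _ _ him him').const_mul _
    have h2 : |∫ τ in x i..x (i+1), (h τ - h (x (i+1))) * g τ| ≤ (ε' * Mg) * |x (i+1) - x i| := by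
      rw [← Real.norm_eq_abs]
      apply intervalIntegral.norm_integral_le_of_norm_le_const
      intro τ hτ
      rw [Set.uIoc_of_le (hxmono i (i+1) (Nat.le_succ _))] at hτ
      have hτm : τ ∈ Icc A B := ⟨le_trans him.1 hτ.1.le, le_trans hτ.2 him'.2⟩
      rw [Real.norm_eq_abs, abs_mul]
      have hd : dist τ (x (i+1)) < δ := by
        rw [Real.dist_eq, abs_sub_lt_iff]
        have := hxsucc i
        constructor <;> [linarith [hτ.1, hτ.2, hΔδ]; linarith [hτ.1, hτ.2, hΔδ, hΔpos]]
      have := hδ τ hτm (x (i+1)) him' hd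
      rw [Real.dist_eq] at this
      exact mul_le_mul this.le (hMg τ hτm) (abs_nonneg _) hε'pos.le
    have h3 : |x (i+1) - x i| = Δ := by rw [hxsucc i]; exact abs_of_pos hΔpos
    rw [h3] at h2
    have := (abs_le.1 (h1 ▸ h2)).2
    linarith
  -- Abel summation induction
  have abel : ∀ k : ℕ, k ≤ N →
      (∑ i ∈ Finset.range k, h (x (i+1)) * (Φ (x (i+1)) - Φ (x i)))
        ≤ (h (x 0) - h (x k)) * C + h (x k) * Φ (x k) := by
    intro k hk
    induction k with
    | zero => simp [hx0, hΦdef]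
    | succ m ih =>
      have hm : m ≤ N := le_trans (Nat.le_succ m) hk
      have ihm := ih hm
      rw [Finset.sum_range_succ]
      have hmono : h (x (m+1)) ≤ h (x m) := hanti (hxmem m hm) (hxmem (m+1) hk) (hxmono m (m+1) (Nat.le_succ m))
      have hΦle : Φ (x m) ≤ C := hC (x m) (hxmem m hm)
      have hphip : 0 ≤ h (x (m+1)) := hpos _ (hxmem (m+1) hk)
      nlinarith [ihm]
  -- combine
  have hsplit : (∫ τ in A..B, h τ * g τ) = ∑ i ∈ Finset.range N, ∫ τ in x i..x (i+1), h τ * g τ := by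
    rw [intervalIntegral.sum_integral_adjacent_intervals (fun k hk => hhgint _ _ (hxmem k hk.le) (hxmem _ hk))]
    rw [hx0, hxN]
  rw [hsplit]
  calc (∑ i ∈ Finset.range N, ∫ τ in x i..x (i+1), h τ * g τ)
      ≤ ∑ i ∈ Finset.range N, (h (x (i+1)) * (Φ (x (i+1)) - Φ (x i)) + ε' * Mg * Δ) := by
        apply Finset.sum_le_sum
        intro i hi
        exact piece i (Finset.mem_range.1 hi)
    _ = (∑ i ∈ Finset.range N, h (x (i+1)) * (Φ (x (i+1)) - Φ (x i))) + N * (ε' * Mg * Δ) := by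
        rw [Finset.sum_add_distrib, Finset.sum_const, Finset.card_range, nsmul_eq_mul]
    _ ≤ (h (x 0) - h (x N)) * C + h (x N) * Φ (x N) + N * (ε' * Mg * Δ) := by
        have := abel N le_rfl
        linarith
    _ ≤ (h A - h B) * C + h B * (∫ τ in A..B, g τ) + ε := by
        rw [hx0, hxN]
        have hNΔ : (N:ℝ) * Δ = B - A := by rw [hΔdef]; field_simp
        have hεcalc : (N:ℝ) * (ε' * Mg * Δ) ≤ ε := by
          have h1 : (N:ℝ) * (ε' * Mg * Δ) = ε' * (Mg * (B - A)) := by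
            rw [← hNΔ]; ring
          rw [h1, hε'def]
          rw [div_mul_eq_mul_div, div_le_iff₀ (by nlinarith)]
          nlinarith
        simp only [hΦdef]
        linarith


lemma myIntNeg {f : ℝ → ℝ} {A B : ℝ} (hAB : A < B)
    (hf : IntegrableOn f (Icc A B))
    (hneg : ∀ᵐ t ∂(volume.restrict (Icc A B)), f t < 0) :
    ∫ t in A..B, f t < 0 := by
  have hki : IntervalIntegrable f volume A B := by
    rw [intervalIntegrable_iff_integrableOn_Ioc_of_le hAB.le]
    exact hf.mono_set Ioc_subset_Icc_self
  have hnegIoc : ∀ᵐ t ∂(volume.restrict (Ioc A B)), f t < 0 :=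
    ae_restrict_of_ae_restrict_of_subset Ioc_subset_Icc_self hneg
  have hnn : 0 ≤ᵐ[volume.restrict (Set.uIoc A B)] (fun t => -f t) := by
    rw [uIoc_of_le hAB.le]
    exact hnegIoc.mono fun t ht => by simp only [Pi.zero_apply]; linarith
  have hiff := integral_pos_iff_support_of_nonneg_ae' hnn hki.neg
  have hpos : 0 < ∫ t in A..B, -f t := by
    rw [hiff]
    refine ⟨hAB, ?_⟩
    by_contra hz
    push_neg at hz
    have hz' : volume (Function.support (fun t => -f t) ∩ Ioc A B) = 0 := le_antisymm hz zero_le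
    have h1 : ∀ᵐ t ∂volume, t ∉ Function.support (fun t => -f t) ∩ Ioc A B :=
      measure_eq_zero_iff_ae_notMem.1 hz'
    have h2 : ∀ᵐ t ∂(volume.restrict (Ioc A B)), t ∉ Function.support (fun t => -f t) ∩ Ioc A B :=
      ae_restrict_of_ae h1
    have h3 : ∀ᵐ t ∂(volume.restrict (Ioc A B)), t ∈ Ioc A B :=
      ae_restrict_mem measurableSet_Ioc
    have hne : (volume.restrict (Ioc A B)) ≠ 0 := by
      intro h0
      have : volume (Ioc A B) = 0 := by
        rw [← Measure.restrict_apply_univ, h0]; simp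
      rw [Real.volume_Ioc] at this
      simp only [ENNReal.ofReal_eq_zero] at this
      linarith
    have : ∀ᵐ t ∂(volume.restrict (Ioc A B)), False := by
      filter_upwards [hnegIoc, h2, h3] with t h₁ h₂ h₃
      exact h₂ ⟨by simp only [Function.mem_support]; intro h; simp at h; linarith, h₃⟩
    have hnb : (ae (volume.restrict (Ioc A B))).NeBot := ae_neBot.2 hne
    exact (this.exists).elim fun _ h => h
  rw [intervalIntegral.integral_neg] at hpos
  linarith


lemma myPrim {Q : ℝ → ℝ} {A B : ℝ} (hQ : ContinuousOn Q (Icc A B)) :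
    ∀ t ∈ Ioo A B, HasDerivAt (fun u => ∫ s in A..u, Q s) (Q t) t := by
  intro t ht
  apply intervalIntegral.integral_hasDerivAt_right
  · exact (hQ.mono (by rw [uIcc_of_le ht.1.le]; exact Icc_subset_Icc le_rfl ht.2.le)).intervalIntegrable
  · exact ⟨Icc A B, Icc_mem_nhds ht.1 ht.2, hQ.aestronglyMeasurable measurableSet_Icc⟩
  · exact hQ.continuousAt (Icc_mem_nhds ht.1 ht.2)

lemma myPrimCont {Q : ℝ → ℝ} {A B : ℝ} (hAB : A ≤ B) (hQ : IntegrableOn Q (Icc A B)) :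
    ContinuousOn (fun u => ∫ s in A..u, Q s) (Icc A B) := by
  have h1 : IntegrableOn Q (uIcc A B) := by rwa [uIcc_of_le hAB]
  have := continuousOn_primitive_interval (μ := volume) h1
  rwa [uIcc_of_le hAB] at this

/-- Part A : comparison with the subsolution η from below. -/
lemma partA {a b c d y η : ℝ → ℝ} {A B : ℝ} (hAB : A ≤ B)
    (ha : ContinuousOn a (Icc A B)) (hb : ContinuousOn b (Icc A B))
    (hc : ContinuousOn c (Icc A B))
    (hy : ContinuousOn y (Icc A B)) (hη : ContinuousOn η (Icc A B))
    (hyd : ∀ t ∈ Ioo A B, HasDerivAt y (abelRHS a b c d y t) t)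
    (hηd : ∀ t ∈ Ioo A B, ∃ v, HasDerivAt η v t ∧
      v + a t * η t ^ 3 + b t * η t ^ 2 + c t * η t + d t ≤ 0) :
    (η A ≤ y A → ∀ t ∈ Icc A B, η t ≤ y t) ∧
      (η A < y A → ∀ t ∈ Icc A B, η t < y t) := by
  set Q : ℝ → ℝ := fun t => a t * (η t ^ 2 + η t * y t + y t ^ 2) + b t * (η t + y t) + c t
    with hQdef
  have hQ : ContinuousOn Q (Icc A B) := by
    apply ContinuousOn.add
    apply ContinuousOn.add
    · exact ha.mul (((hη.pow 2).add (hη.mul hy)).add (hy.pow 2))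
    · exact hb.mul (hη.add hy)
    · exact hc
  set I : ℝ → ℝ := fun u => ∫ s in A..u, Q s with hIdef
  set MM : ℝ → ℝ := fun t => Real.exp (I t) with hMdef
  have hMcont : ContinuousOn MM (Icc A B) :=
    Real.continuous_exp.comp_continuousOn (myPrimCont hAB (hQ.integrableOn_Icc))
  have hMpos : ∀ t, 0 < MM t := fun t => Real.exp_pos _
  have hMA : MM A = 1 := by simp [hMdef, hIdef]
  have hMd : ∀ t ∈ Ioo A B, HasDerivAt MM (Q t * MM t) t := by
    intro t ht
    have := (myPrim hQ t ht).exp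
    simpa [hMdef, mul_comm] using this
  set F : ℝ → ℝ := fun t => MM t * (η t - y t) with hFdef
  have hFc : ContinuousOn F (Icc A B) := hMcont.mul (hη.sub hy)
  have hFd : ∀ t ∈ Ioo A B, ∃ dd, dd ≤ 0 ∧ HasDerivAt F dd t := by
    intro t ht
    obtain ⟨v, hv, hvle⟩ := hηd t ht
    refine ⟨Q t * MM t * (η t - y t) + MM t * (v - abelRHS a b c d y t), ?_, ?_⟩
    · have halg : Q t * (η t - y t) + (v - abelRHS a b c d y t)
          ≤ Q t * (η t - y t) + (-(a t * η t ^ 3 + b t * η t ^ 2 + c t * η t + d t)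
            - abelRHS a b c d y t) := by
        have : v ≤ -(a t * η t ^ 3 + b t * η t ^ 2 + c t * η t + d t) := by linarith
        linarith
      have hzero : Q t * (η t - y t) + (-(a t * η t ^ 3 + b t * η t ^ 2 + c t * η t + d t)
          - abelRHS a b c d y t) = 0 := by
        simp only [hQdef, abelRHS]; ring
      have h2 : Q t * (η t - y t) + (v - abelRHS a b c d y t) ≤ 0 := by
        rw [hzero] at halg; exact halg
      have h3 : Q t * MM t * (η t - y t) + MM t * (v - abelRHS a b c d y t)
          = MM t * (Q t * (η t - y t) + (v - abelRHS a b c d y t)) := by ring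
      rw [h3]
      exact mul_nonpos_of_nonneg_of_nonpos (hMpos t).le h2
    · exact (hMd t ht).mul (hv.sub (hyd t ht))
  have hmain := myAnti hFc hFd
  constructor
  · intro h0 t ht
    have := hmain t ht
    rw [hFdef] at this
    simp only [hMA] at this
    have h2 : MM t * (η t - y t) ≤ η A - y A := by simpa using this
    nlinarith [hMpos t]
  · intro h0 t ht
    have := hmain t ht
    rw [hFdef] at this
    simp only [hMA] at this
    have h2 : MM t * (η t - y t) ≤ η A - y A := by simpa using this
    nlinarith [hMpos t]


/-- Part B : comparison with y₁ from above. -/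
lemma partB {a b c d a₁ b₁ c₁ d₁ y y₁ : ℝ → ℝ} {A B C : ℝ} (hAB : A ≤ B)
    (ha : ContinuousOn a (Icc A B)) (hb : ContinuousOn b (Icc A B))
    (hc : ContinuousOn c (Icc A B)) (hd : ContinuousOn d (Icc A B))
    (ha₁ : ContinuousOn a₁ (Icc A B)) (hb₁ : ContinuousOn b₁ (Icc A B))
    (hc₁ : ContinuousOn c₁ (Icc A B)) (hd₁ : ContinuousOn d₁ (Icc A B))
    (hy : ContinuousOn y (Icc A B)) (hy₁ : ContinuousOn y₁ (Icc A B))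
    (hyd : ∀ t ∈ Ioo A B, HasDerivAt y (abelRHS a b c d y t) t)
    (hy₁d : ∀ t ∈ Ioo A B, HasDerivAt y₁ (abelRHS a₁ b₁ c₁ d₁ y₁ t) t)
    (hCpos : 0 ≤ C)
    (hpint : IntegrableOn (fun s => b s ^ 2 / a s) (Icc A B))
    (haneg : ∀ᵐ t ∂(volume.restrict (Icc A B)), a t < 0)
    (hΦle : ∀ t ∈ Icc A B, (∫ τ in A..t,
        Real.exp (∫ s in A..τ, (c s - b s ^ 2 / a s)) *
          ((a₁ τ - a τ) * y₁ τ ^ 3 + (b₁ τ - b τ) * y₁ τ ^ 2 +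
            (c₁ τ - c τ) * y₁ τ + (d₁ τ - d τ))) ≤ C)
    (hy0 : y A - y₁ A ≤ -C) :
    (∀ t ∈ Icc A B, y t ≤ y₁ t) ∧ (y A < y₁ A → ∀ t ∈ Icc A B, y t < y₁ t) := by
  -- basic objects
  set G : ℝ → ℝ := fun τ => (a₁ τ - a τ) * y₁ τ ^ 3 + (b₁ τ - b τ) * y₁ τ ^ 2 +
      (c₁ τ - c τ) * y₁ τ + (d₁ τ - d τ) with hGdef
  have hGc : ContinuousOn G (Icc A B) := by
    apply ContinuousOn.add
    apply ContinuousOn.add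
    apply ContinuousOn.add
    · exact (ha₁.sub ha).mul (hy₁.pow 3)
    · exact (hb₁.sub hb).mul (hy₁.pow 2)
    · exact (hc₁.sub hc).mul hy₁
    · exact hd₁.sub hd
  set p : ℝ → ℝ := fun s => c s - b s ^ 2 / a s with hpdef
  have hpint' : IntegrableOn p (Icc A B) := by
    exact (hc.integrableOn_Icc).sub hpint
  set P : ℝ → ℝ := fun τ => ∫ s in A..τ, p s with hPdef
  have hPc : ContinuousOn P (Icc A B) := myPrimCont hAB hpint'
  set E : ℝ → ℝ := fun τ => Real.exp (P τ) with hEdef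
  have hEc : ContinuousOn E (Icc A B) := Real.continuous_exp.comp_continuousOn hPc
  set q : ℝ → ℝ := fun t =>
      a t * (y t ^ 2 + y t * y₁ t + y₁ t ^ 2) + b t * (y t + y₁ t) + c t with hqdef
  have hqc : ContinuousOn q (Icc A B) := by
    apply ContinuousOn.add
    apply ContinuousOn.add
    · exact ha.mul (((hy.pow 2).add (hy.mul hy₁)).add (hy₁.pow 2))
    · exact hb.mul (hy.add hy₁)
    · exact hc
  set ψ : ℝ → ℝ := fun t => ∫ s in A..t, q s with hψdef
  have hψc : ContinuousOn ψ (Icc A B) := myPrimCont hAB hqc.integrableOn_Icc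
  set μf : ℝ → ℝ := fun t => Real.exp (ψ t) with hμdef
  have hμc : ContinuousOn μf (Icc A B) := Real.continuous_exp.comp_continuousOn hψc
  have hμpos : ∀ t, 0 < μf t := fun t => Real.exp_pos _
  set hfun : ℝ → ℝ := fun t => Real.exp (ψ t - P t) with hhdef
  have hhc : ContinuousOn hfun (Icc A B) := Real.continuous_exp.comp_continuousOn (hψc.sub hPc)
  have hhpos : ∀ t, 0 < hfun t := fun t => Real.exp_pos _
  have hhA : hfun A = 1 := by simp [hhdef, hψdef, hPdef]
  have hμA : μf A = 1 := by simp [hμdef, hψdef]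
  have hμhE : ∀ τ, μf τ = hfun τ * E τ := by
    intro τ
    rw [hμdef, hhdef, hEdef, ← Real.exp_add]
    ring_nf
  -- Φ
  set Φ : ℝ → ℝ := fun t => ∫ τ in A..t, E τ * G τ with hΦdef
  have hEGc : ContinuousOn (fun τ => E τ * G τ) (Icc A B) := hEc.mul hGc
  have hΦc : ContinuousOn Φ (Icc A B) := myPrimCont hAB hEGc.integrableOn_Icc
  have hΦA : Φ A = 0 := by simp [hΦdef]
  have hΦC : ∀ t ∈ Icc A B, Φ t ≤ C := by
    intro t ht
    have := hΦle t ht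
    simpa [hΦdef, hEdef, hPdef, hGdef, hpdef] using this
  -- the exact identity F t = u A + ∫ μ G
  set F : ℝ → ℝ := fun t => μf t * (y t - y₁ t) with hFdef
  have hFc : ContinuousOn F (Icc A B) := hμc.mul (hy.sub hy₁)
  have hμGc : ContinuousOn (fun τ => μf τ * G τ) (Icc A B) := hμc.mul hGc
  have hFd : ∀ t ∈ Ioo A B, HasDerivAt F (μf t * G t) t := by
    intro t ht
    have h1 : HasDerivAt μf (q t * μf t) t := by
      have := (myPrim hqc t ht).exp
      simpa [hμdef, hψdef, mul_comm] using this
    have h2 := h1.mul ((hyd t ht).sub (hy₁d t ht))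
    have heq : q t * μf t * (y t - y₁ t) +
        μf t * (abelRHS a b c d y t - abelRHS a₁ b₁ c₁ d₁ y₁ t) = μf t * G t := by
      simp only [abelRHS, hqdef, hGdef]; ring
    rw [Pi.sub_apply, heq] at h2
    exact h2
  have hFid : ∀ t ∈ Icc A B, F t = (y A - y₁ A) + ∫ τ in A..t, μf τ * G τ := by
    intro t ht
    have := myFTC hFc hμGc hFd t ht
    rw [this, hFdef]
    simp [hμA]
  -- rewrite integrand via h·(E·G)
  have hinteq : (fun τ => μf τ * G τ) = fun τ => hfun τ * (E τ * G τ) := by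
    funext τ
    rw [hμhE τ]; ring
  -- antitone h
  have hanti : AntitoneOn hfun (Icc A B) := by
    intro u hu v hv huv
    have hqint : ∀ w ∈ Icc A B, IntervalIntegrable q volume A w := fun w hw =>
      (hqc.mono (by rw [uIcc_of_le hw.1]; exact Icc_subset_Icc le_rfl hw.2)).intervalIntegrable
    have hpint'' : ∀ w ∈ Icc A B, IntervalIntegrable p volume A w := fun w hw => by
      rw [intervalIntegrable_iff_integrableOn_Ioc_of_le hw.1]
      exact hpint'.mono_set ((Ioc_subset_Icc_self).trans (Icc_subset_Icc le_rfl hw.2))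
    have hquv : IntervalIntegrable q volume u v :=
      (hqc.mono (uIcc_subset_Icc hu hv)).intervalIntegrable
    have hpuv : IntervalIntegrable p volume u v := by
      rw [intervalIntegrable_iff_integrableOn_Ioc_of_le huv]
      exact hpint'.mono_set ((Ioc_subset_Icc_self).trans (Icc_subset_Icc hu.1 hv.2))
    have hψdiff : ψ v - ψ u = ∫ s in u..v, q s := by
      rw [hψdef]
      rw [← intervalIntegral.integral_interval_sub_left (hqint v hv) (hqint u hu)]
    have hPdiff : P v - P u = ∫ s in u..v, p s := by
      rw [hPdef]
      rw [← intervalIntegral.integral_interval_sub_left (hpint'' v hv) (hpint'' u hu)]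
    have hae : ∀ᵐ t ∂(volume.restrict (Icc u v)), a t < 0 :=
      ae_restrict_of_ae_restrict_of_subset (Icc_subset_Icc hu.1 hv.2) haneg
    have hint1 : (0:ℝ) ≤ ∫ s in u..v, (p s - q s) := by
      apply intervalIntegral.integral_nonneg_of_ae_restrict huv
      filter_upwards [hae] with t hat
      have := myAlg1 (b := b t) (c := c t) (u := y t) (v := y₁ t) hat
      simp only [hpdef, hqdef, Pi.zero_apply]
      linarith
    have hint2 : (∫ s in u..v, q s) ≤ ∫ s in u..v, p s := by
      have := intervalIntegral.integral_sub hpuv hquv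
      linarith [hint1, this ▸ hint1]
    have : ψ v - P v ≤ ψ u - P u := by
      have h1 : (ψ v - P v) - (ψ u - P u) = (∫ s in u..v, q s) - ∫ s in u..v, p s := by
        rw [← hψdiff, ← hPdiff]; ring
      linarith
    rw [hhdef]
    exact Real.exp_le_exp.2 this
  have hhle1 : ∀ t ∈ Icc A B, hfun t ≤ 1 := by
    intro t ht
    rw [← hhA]
    exact hanti (left_mem_Icc.2 hAB) ht ht.1
  -- weak bound
  have hweak : ∀ t ∈ Icc A B, F t ≤ (y A - y₁ A) + C := by
    intro t ht
    have hkey := myKey (C := C) ht.1 (hEGc.mono (Icc_subset_Icc le_rfl ht.2))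
      (hhc.mono (Icc_subset_Icc le_rfl ht.2))
      (hanti.mono (Icc_subset_Icc le_rfl ht.2))
      (fun s hs => (hhpos s).le)
      (fun s hs => hΦC s ⟨hs.1, le_trans hs.2 ht.2⟩)
    have hΦt : (∫ τ in A..t, E τ * G τ) = Φ t := rfl
    rw [hΦt, hhA] at hkey
    have h2 : (1 - hfun t) * C + hfun t * Φ t ≤ C := by
      have h3 := hΦC t ht
      nlinarith [(hhpos t).le, hhle1 t ht]
    have := hFid t ht
    rw [this, hinteq]
    linarith
  have hweak' : ∀ t ∈ Icc A B, y t ≤ y₁ t := by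
    intro t ht
    have h1 := hweak t ht
    rw [hFdef] at h1
    have h2 : μf t * (y t - y₁ t) ≤ 0 := by simpa using le_trans h1 (by linarith)
    nlinarith [hμpos t]
  refine ⟨hweak', ?_⟩
  -- strict part
  intro hstrict
  by_contra hcon
  push_neg at hcon
  obtain ⟨t₂, ht₂m, ht₂⟩ := hcon
  -- the zero set
  set Z : Set ℝ := Icc A B ∩ (fun s => y₁ s - y s) ⁻¹' (Iic 0) with hZdef
  have hZne : Z.Nonempty := ⟨t₂, ht₂m, by simp [mem_preimage]; linarith⟩
  have hZclosed : IsClosed Z :=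
    (hy₁.sub hy).preimage_isClosed_of_isClosed isClosed_Icc isClosed_Iic
  have hZbdd : BddBelow Z := ⟨A, fun z hz => hz.1.1⟩
  set ts : ℝ := sInf Z with htsdef
  have htsZ : ts ∈ Z := hZclosed.csInf_mem hZne hZbdd
  have htsIcc : ts ∈ Icc A B := htsZ.1
  have huts : y ts = y₁ ts := le_antisymm (hweak' ts htsIcc) (by have := htsZ.2; simp at this; linarith)
  have htsA : A < ts := by
    rcases eq_or_lt_of_le htsIcc.1 with h | h
    · exfalso; rw [← h] at huts; linarith
    · exact h
  have hult : ∀ s, A ≤ s → s < ts → y s < y₁ s := by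
    intro s hs1 hs2
    have hsIcc : s ∈ Icc A B := ⟨hs1, le_trans hs2.le htsIcc.2⟩
    rcases lt_or_eq_of_le (hweak' s hsIcc) with h | h
    · exact h
    · exfalso
      have : s ∈ Z := ⟨hsIcc, by simp [mem_preimage]; linarith⟩
      exact absurd (csInf_le hZbdd this) (not_le.2 hs2)
  -- C > 0
  have hFts : F ts = 0 := by rw [hFdef]; simp [huts]
  have hCpos' : 0 < C := by
    have h1 := hweak ts htsIcc
    rw [hFts] at h1
    linarith
  -- choose A'
  have hΦtendsto : ContinuousWithinAt Φ (Icc A B) A := hΦc A (left_mem_Icc.2 hAB)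
  have hev : ∀ᶠ s in nhdsWithin A (Icc A B), Φ s < C/2 := by
    apply Filter.Tendsto.eventually_lt_const _ hΦtendsto
    rw [hΦA]; linarith
  rw [eventually_nhdsWithin_iff, Metric.eventually_nhds_iff] at hev
  obtain ⟨ε, hεpos, hεball⟩ := hev
  set A' : ℝ := min (A + ε/2) ((A + ts)/2) with hA'def
  have hA'1 : A < A' := by
    apply lt_min <;> linarith
  have hA'2 : A' < ts := by
    apply lt_of_le_of_lt (min_le_right _ _); linarith
  have hA'Icc : A' ∈ Icc A B := ⟨hA'1.le, le_trans hA'2.le htsIcc.2⟩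
  have hΦA' : ∀ s ∈ Icc A A', Φ s < C/2 := by
    intro s hs
    refine hεball ?_ ⟨hs.1, le_trans hs.2 hA'Icc.2⟩
    rw [Real.dist_eq, abs_sub_lt_iff]
    constructor
    · have : A' ≤ A + ε/2 := min_le_left _ _
      linarith [hs.2, hs.1]
    · linarith [hs.1, hεpos]
  -- h A' < 1
  have hqmp : IntegrableOn (fun s => q s - p s) (Icc A A') :=
    ((hqc.mono (Icc_subset_Icc le_rfl hA'Icc.2)).integrableOn_Icc).sub
      (hpint'.mono_set (Icc_subset_Icc le_rfl hA'Icc.2))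
  have haeA' : ∀ᵐ t ∂(volume.restrict (Icc A A')), a t < 0 :=
    ae_restrict_of_ae_restrict_of_subset (Icc_subset_Icc le_rfl hA'Icc.2) haneg
  have hintneg : (∫ s in A..A', (q s - p s)) < 0 := by
    apply myIntNeg hA'1 hqmp
    filter_upwards [haeA', ae_restrict_mem measurableSet_Icc] with t hat htm
    have hne : y t ≠ y₁ t := ne_of_lt (hult t htm.1 (lt_of_le_of_lt htm.2 hA'2))
    have := myAlg2 (b := b t) (c := c t) hat hne
    simp only [hqdef, hpdef]
    linarith
  have hψPA' : ψ A' - P A' < 0 := by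
    have hqint : IntervalIntegrable q volume A A' :=
      (hqc.mono (by rw [uIcc_of_le hA'1.le]; exact Icc_subset_Icc le_rfl hA'Icc.2)).intervalIntegrable
    have hpintA' : IntervalIntegrable p volume A A' := by
      rw [intervalIntegrable_iff_integrableOn_Ioc_of_le hA'1.le]
      exact hpint'.mono_set ((Ioc_subset_Icc_self).trans (Icc_subset_Icc le_rfl hA'Icc.2))
    have := intervalIntegral.integral_sub hqint hpintA'
    rw [hψdef, hPdef]
    calc (∫ s in A..A', q s) - ∫ s in A..A', p s = ∫ s in A..A', (q s - p s) := this.symm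
      _ < 0 := hintneg
  have hhA' : hfun A' < 1 := by
    rw [hhdef]
    calc Real.exp (ψ A' - P A') < Real.exp 0 := Real.exp_lt_exp.2 (by linarith)
      _ = 1 := Real.exp_zero
  -- split the integral and apply myKey twice
  have hEGint : ∀ u v : ℝ, u ∈ Icc A B → v ∈ Icc A B →
      IntervalIntegrable (fun τ => hfun τ * (E τ * G τ)) volume u v := fun u v hu hv =>
    ((hhc.mul hEGc).mono (uIcc_subset_Icc hu hv)).intervalIntegrable
  have hsplit : (∫ τ in A..ts, hfun τ * (E τ * G τ))
      = (∫ τ in A..A', hfun τ * (E τ * G τ)) + ∫ τ in A'..ts, hfun τ * (E τ * G τ) := by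
    rw [intervalIntegral.integral_add_adjacent_intervals
      (hEGint A A' (left_mem_Icc.2 hAB) hA'Icc)
      (hEGint A' ts hA'Icc htsIcc)]
  have hIccA' : Icc A A' ⊆ Icc A B := Icc_subset_Icc le_rfl hA'Icc.2
  have hIccA'ts : Icc A' ts ⊆ Icc A B := Icc_subset_Icc hA'1.le htsIcc.2
  have hkey1 := myKey (C := C/2) hA'1.le (hEGc.mono hIccA') (hhc.mono hIccA')
    (hanti.mono hIccA') (fun s _ => (hhpos s).le)
    (fun s hs => (hΦA' s hs).le)
  rw [hhA] at hkey1
  have hEGintA : ∀ w ∈ Icc A B, IntervalIntegrable (fun τ => E τ * G τ) volume A w :=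
    fun w hw => (hEGc.mono (by rw [uIcc_of_le hw.1]; exact Icc_subset_Icc le_rfl hw.2)).intervalIntegrable
  have hCbound2 : ∀ s ∈ Icc A' ts, (∫ τ in A'..s, E τ * G τ) ≤ C - Φ A' := by
    intro s hs
    have hsIcc : s ∈ Icc A B := hIccA'ts hs
    have hdiff : (∫ τ in A'..s, E τ * G τ) = Φ s - Φ A' := by
      rw [hΦdef, ← intervalIntegral.integral_interval_sub_left (hEGintA s hsIcc) (hEGintA A' hA'Icc)]
    rw [hdiff]
    have := hΦC s hsIcc
    linarith
  have hkey2 := myKey (C := C - Φ A') hA'2.le (hEGc.mono hIccA'ts) (hhc.mono hIccA'ts)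
    (hanti.mono hIccA'ts) (fun s _ => (hhpos s).le) hCbound2
  -- final contradiction
  have hΦdiffts : (∫ τ in A'..ts, E τ * G τ) = Φ ts - Φ A' := by
    rw [hΦdef, ← intervalIntegral.integral_interval_sub_left (hEGintA ts htsIcc) (hEGintA A' hA'Icc)]
  rw [hΦdiffts] at hkey2
  have hΦA'eq : (∫ τ in A..A', E τ * G τ) = Φ A' := rfl
  rw [hΦA'eq] at hkey1
  have hid := hFid ts htsIcc
  rw [hFts, hinteq, hsplit] at hid
  have hΦtsC : Φ ts ≤ C := hΦC ts htsIcc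
  have hhts : 0 ≤ hfun ts := (hhpos ts).le
  have hhA'nn : 0 ≤ hfun A' := (hhpos A').le
  -- combine
  nlinarith [hkey1, hkey2, hid, hstrict, hy0, hΦtsC, hhts, hhA', hCpos']


lemma eIco_coe (t₀ r : ℝ) : eIco t₀ ((r : ℝ) : EReal) = Ico t₀ r := by
  ext x
  simp only [eIco, mem_setOf_eq, mem_Ico, EReal.coe_lt_coe_iff]

lemma exists_btwn {t : ℝ} {τ : EReal} (h : (t : EReal) < τ) :
    ∃ x : ℝ, t < x ∧ (x : EReal) < τ := by
  induction τ using EReal.rec with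
  | bot => exact absurd h (by simp)
  | coe T =>
    have hT : t < T := EReal.coe_lt_coe_iff.1 h
    exact ⟨(t + T) / 2, by linarith, EReal.coe_lt_coe_iff.2 (by linarith)⟩
  | top => exact ⟨t + 1, by linarith, EReal.coe_lt_top _⟩

lemma eIco_Icc_subset {t₀ : ℝ} {τ : EReal} {t : ℝ} (ht : t ∈ eIco t₀ τ) :
    Icc t₀ t ⊆ eIco t₀ τ :=
  fun s hs => ⟨hs.1, lt_of_le_of_lt (EReal.coe_le_coe_iff.2 hs.2) ht.2⟩

lemma eIco_sub_nhds {t₀ s : ℝ} {τ : EReal} (hs : s ∈ eIco t₀ τ) {t : ℝ} (ht : t ∈ Ioo t₀ s) :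
    eIco t₀ τ ∈ nhds t := by
  apply Filter.mem_of_superset (isOpen_Ioo.mem_nhds ht)
  intro x hx
  exact ⟨hx.1.le, lt_trans (EReal.coe_lt_coe_iff.2 hx.2) hs.2⟩

/-- Theorem 3.2 -/
theorem stmt_5 (t₀ : ℝ) (τ₀ : EReal) (hτ : (t₀ : EReal) < τ₀)
    (a b c d a₁ b₁ c₁ d₁ y₁ η : ℝ → ℝ)
    (ha : ContinuousOn a (eIco t₀ τ₀)) (hb : ContinuousOn b (eIco t₀ τ₀))
    (hc : ContinuousOn c (eIco t₀ τ₀)) (hd : ContinuousOn d (eIco t₀ τ₀))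
    (ha₁ : ContinuousOn a₁ (eIco t₀ τ₀)) (hb₁ : ContinuousOn b₁ (eIco t₀ τ₀))
    (hc₁ : ContinuousOn c₁ (eIco t₀ τ₀)) (hd₁ : ContinuousOn d₁ (eIco t₀ τ₀))
    (hy₁ : IsAbelSolOn a₁ b₁ c₁ d₁ y₁ (eIco t₀ τ₀))
    (hη : ∀ t ∈ eIco t₀ τ₀, ∃ v : ℝ, HasDerivWithinAt η v (eIco t₀ τ₀) t ∧
      v + a t * η t ^ 3 + b t * η t ^ 2 + c t * η t + d t ≤ 0)
    (hη0 : η t₀ ≤ y₁ t₀)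
    (haneg : ∀ᵐ t ∂(volume.restrict (eIco t₀ τ₀)), a t < 0)
    (hint : ∀ t : ℝ, t₀ < t → (t : EReal) < τ₀ →
      IntegrableOn (fun s => b s ^ 2 / a s) (Icc t₀ t))
    (γ : ℝ) (hγ : γ ∈ Icc (η t₀) (y₁ t₀))
    (hII : ∀ t ∈ eIco t₀ τ₀,
      γ - y₁ t₀ + (∫ τ in t₀..t,
        Real.exp (∫ s in t₀..τ, (c s - b s ^ 2 / a s)) *
          ((a₁ τ - a τ) * y₁ τ ^ 3 + (b₁ τ - b τ) * y₁ τ ^ 2 +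
            (c₁ τ - c τ) * y₁ τ + (d₁ τ - d τ))) ≤ 0)
    (t₁ : EReal) (y : ℝ → ℝ) (ht₁ : (t₀ : EReal) < t₁) (ht₁' : t₁ ≤ τ₀)
    (hy : IsAbelSolOn a b c d y (eIco t₀ t₁))
    (hnc : Noncontinuable a b c d t₀ τ₀ t₁ y)
    (hy0 : y t₀ ∈ Icc (η t₀) γ) :
    t₁ = τ₀ ∧ (∀ t ∈ eIco t₀ τ₀, η t ≤ y t ∧ y t ≤ y₁ t) ∧
      (η t₀ < y t₀ → ∀ t ∈ eIco t₀ τ₀, η t < y t) ∧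
      (y t₀ < y₁ t₀ → ∀ t ∈ eIco t₀ τ₀, y t < y₁ t) := by
  have hS₁D : eIco t₀ t₁ ⊆ eIco t₀ τ₀ := fun x hx => ⟨hx.1, lt_of_lt_of_le hx.2 ht₁'⟩
  have ht₀D : t₀ ∈ eIco t₀ τ₀ := ⟨le_rfl, hτ⟩
  have ht₀S₁ : t₀ ∈ eIco t₀ t₁ := ⟨le_rfl, ht₁⟩
  have hycont : ContinuousOn y (eIco t₀ t₁) := fun t ht => (hy t ht).continuousWithinAt
  have hy₁cont : ContinuousOn y₁ (eIco t₀ τ₀) := fun t ht => (hy₁ t ht).continuousWithinAt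
  have hηcont : ContinuousOn η (eIco t₀ τ₀) := fun t ht => ((hη t ht).choose_spec.1).continuousWithinAt
  -- interior derivatives
  have hyD : ∀ s ∈ eIco t₀ t₁, ∀ t ∈ Ioo t₀ s, HasDerivAt y (abelRHS a b c d y t) t := by
    intro s hs t ht
    have htS : t ∈ eIco t₀ t₁ := ⟨ht.1.le, lt_trans (EReal.coe_lt_coe_iff.2 ht.2) hs.2⟩
    exact (hy t htS).hasDerivAt (eIco_sub_nhds hs ht)
  have hy₁D : ∀ s ∈ eIco t₀ τ₀, ∀ t ∈ Ioo t₀ s, HasDerivAt y₁ (abelRHS a₁ b₁ c₁ d₁ y₁ t) t := by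
    intro s hs t ht
    have htS : t ∈ eIco t₀ τ₀ := ⟨ht.1.le, lt_trans (EReal.coe_lt_coe_iff.2 ht.2) hs.2⟩
    exact (hy₁ t htS).hasDerivAt (eIco_sub_nhds hs ht)
  have hηD : ∀ s ∈ eIco t₀ τ₀, ∀ t ∈ Ioo t₀ s, ∃ v, HasDerivAt η v t ∧
      v + a t * η t ^ 3 + b t * η t ^ 2 + c t * η t + d t ≤ 0 := by
    intro s hs t ht
    have htS : t ∈ eIco t₀ τ₀ := ⟨ht.1.le, lt_trans (EReal.coe_lt_coe_iff.2 ht.2) hs.2⟩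
    obtain ⟨v, hv, hineq⟩ := hη t htS
    exact ⟨v, hv.hasDerivAt (eIco_sub_nhds hs ht), hineq⟩
  -- the compact-interval comparison
  have comp : ∀ s ∈ eIco t₀ t₁, ∀ t ∈ Icc t₀ s,
      (η t ≤ y t ∧ y t ≤ y₁ t) ∧ (η t₀ < y t₀ → η t < y t) ∧
        (y t₀ < y₁ t₀ → y t < y₁ t) := by
    intro s hs
    rcases eq_or_lt_of_le hs.1 with heq | hlt
    · intro t ht
      rw [← heq] at ht
      have htt : t = t₀ := le_antisymm ht.2 ht.1
      subst htt
      exact ⟨⟨hy0.1, le_trans hy0.2 hγ.2⟩, fun h => h, fun h => h⟩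
    · have hsub : Icc t₀ s ⊆ eIco t₀ t₁ := eIco_Icc_subset hs
      have hsubD : Icc t₀ s ⊆ eIco t₀ τ₀ := hsub.trans hS₁D
      have hsD : s ∈ eIco t₀ τ₀ := hS₁D hs
      have hApart := partA hs.1 (ha.mono hsubD) (hb.mono hsubD) (hc.mono hsubD)
        (hycont.mono hsub) (hηcont.mono hsubD) (hyD s hs) (hηD s hsD)
      have hBpart := partB (C := y₁ t₀ - γ) hs.1 (ha.mono hsubD) (hb.mono hsubD)
        (hc.mono hsubD) (hd.mono hsubD) (ha₁.mono hsubD) (hb₁.mono hsubD)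
        (hc₁.mono hsubD) (hd₁.mono hsubD) (hycont.mono hsub) (hy₁cont.mono hsubD)
        (hyD s hs) (hy₁D s hsD) (by linarith [hγ.2])
        (hint s hlt hsD.2)
        (ae_restrict_of_ae_restrict_of_subset hsubD haneg)
        (fun t ht => by have := hII t (hsubD ht); linarith)
        (by linarith [hy0.2])
      intro t ht
      exact ⟨⟨hApart.1 hy0.1 t ht, hBpart.1 t ht⟩,
        fun h => hApart.2 h t ht, fun h => hBpart.2 h t ht⟩
  -- Part C : t₁ = τ₀
  have hteq : t₁ = τ₀ := by
    by_contra hne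
    have hlt' : t₁ < τ₀ := lt_of_le_of_ne ht₁' hne
    have ht₁top : t₁ ≠ ⊤ := (lt_of_lt_of_le hlt' le_top).ne
    have ht₁bot : t₁ ≠ ⊥ := ((EReal.bot_lt_coe t₀).trans ht₁).ne'
    set r : ℝ := t₁.toReal with hrdef
    have hrE : ((r : ℝ) : EReal) = t₁ := EReal.coe_toReal ht₁top ht₁bot
    have hS₁eq : eIco t₀ t₁ = Ico t₀ r := by rw [← hrE, eIco_coe]
    have ht₀r : t₀ < r := by
      have := ht₁; rw [← hrE] at this; exact EReal.coe_lt_coe_iff.1 this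
    have hrτ : ((r : ℝ) : EReal) < τ₀ := by rw [hrE]; exact hlt'
    obtain ⟨R₀, hrR₀, hR₀τ⟩ := exists_btwn hrτ
    have ht₀R₀ : t₀ ≤ R₀ := by linarith
    have hIccR₀ : Icc t₀ R₀ ⊆ eIco t₀ τ₀ :=
      fun x hx => ⟨hx.1, lt_of_le_of_lt (EReal.coe_le_coe_iff.2 hx.2) hR₀τ⟩
    -- bounds on η, y₁ and hence y
    obtain ⟨Cη, hCη⟩ := isCompact_Icc.exists_bound_of_continuousOn (hηcont.mono hIccR₀)
    obtain ⟨Cy₁, hCy₁⟩ := isCompact_Icc.exists_bound_of_continuousOn (hy₁cont.mono hIccR₀)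
    have hCη0 : 0 ≤ Cη := le_trans (norm_nonneg _) (hCη t₀ ⟨le_rfl, ht₀R₀⟩)
    set N₀ : ℝ := max Cη Cy₁ + 1 with hN₀def
    have hN₀1 : 1 ≤ N₀ := by
      have : (0:ℝ) ≤ max Cη Cy₁ := le_trans hCη0 (le_max_left _ _)
      linarith
    have hybound : ∀ t, t₀ ≤ t → t < r → |y t| ≤ N₀ - 1 := by
      intro t htt0 htr
      have htS₁ : t ∈ eIco t₀ t₁ := by rw [hS₁eq]; exact ⟨htt0, htr⟩
      have hcmp := (comp t htS₁ t ⟨htt0, le_rfl⟩).1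
      have htR₀ : t ∈ Icc t₀ R₀ := ⟨htt0, by linarith⟩
      have h1 := hCη t htR₀
      have h2 := hCy₁ t htR₀
      rw [Real.norm_eq_abs] at h1 h2
      rw [abs_le]
      constructor
      · have : -Cη ≤ η t := by have := abs_le.1 h1; linarith [this.1]
        have hm : Cη ≤ max Cη Cy₁ := le_max_left _ _
        simp only [hN₀def]
        linarith [hcmp.1]
      · have : y₁ t ≤ Cy₁ := by have := abs_le.1 h2; linarith [this.2]
        have hm : Cy₁ ≤ max Cη Cy₁ := le_max_right _ _
        simp only [hN₀def]
        linarith [hcmp.2]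
    -- coefficient bounds
    obtain ⟨Ca, hCa⟩ := isCompact_Icc.exists_bound_of_continuousOn (ha.mono hIccR₀)
    obtain ⟨Cb, hCb⟩ := isCompact_Icc.exists_bound_of_continuousOn (hb.mono hIccR₀)
    obtain ⟨Cc, hCc⟩ := isCompact_Icc.exists_bound_of_continuousOn (hc.mono hIccR₀)
    obtain ⟨Cd, hCd⟩ := isCompact_Icc.exists_bound_of_continuousOn (hd.mono hIccR₀)
    have hCa0 : 0 ≤ Ca := le_trans (norm_nonneg _) (hCa t₀ ⟨le_rfl, ht₀R₀⟩)
    have hCb0 : 0 ≤ Cb := le_trans (norm_nonneg _) (hCb t₀ ⟨le_rfl, ht₀R₀⟩)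
    have hCc0 : 0 ≤ Cc := le_trans (norm_nonneg _) (hCc t₀ ⟨le_rfl, ht₀R₀⟩)
    have hCd0 : 0 ≤ Cd := le_trans (norm_nonneg _) (hCd t₀ ⟨le_rfl, ht₀R₀⟩)
    set v : ℝ → ℝ → ℝ := fun t x => -(a t * x ^ 3 + b t * x ^ 2 + c t * x + d t) with hvdef
    set Cf : ℝ := Ca * N₀ ^ 3 + Cb * N₀ ^ 2 + Cc * N₀ + Cd with hCfdef
    set K : ℝ := Ca * (3 * N₀ ^ 2) + Cb * (2 * N₀) + Cc with hKdef
    have hCf0 : 0 ≤ Cf := by positivity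
    have hK0 : 0 ≤ K := by positivity
    set δ : ℝ := min (1 / (Cf + 1)) ((R₀ - r) / 2) with hδdef
    have hδpos : 0 < δ := lt_min (by positivity) (by linarith)
    set tc : ℝ := max ((t₀ + r) / 2) (r - δ / 2) with htcdef
    have htc0 : t₀ < tc := lt_of_lt_of_le (by linarith) (le_max_left _ _)
    have htcr : tc < r := by
      apply max_lt <;> linarith
    have hrtcδ : r < tc + δ := by
      have : r - δ / 2 ≤ tc := le_max_right _ _
      linarith
    have htcδR₀ : tc + δ ≤ R₀ := by
      have h1 : δ ≤ (R₀ - r) / 2 := min_le_right _ _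
      linarith
    have hIccPL : Icc tc (tc + δ) ⊆ Icc t₀ R₀ :=
      Icc_subset_Icc (by linarith) (by linarith)
    have habsball : ∀ x ∈ Metric.closedBall (y tc) 1, |x| ≤ N₀ := by
      intro x hx
      rw [Metric.mem_closedBall, Real.dist_eq] at hx
      have hyc := hybound tc htc0.le htcr
      have h2 : |x| ≤ |x - y tc| + |y tc| := by
        have := abs_add_le (x - y tc) (y tc)
        simpa using this
      linarith
    -- auxiliary estimates for the Picard-Lindelof data
    have hcoefbd : ∀ t ∈ Icc tc (tc + δ),
        |a t| ≤ Ca ∧ |b t| ≤ Cb ∧ |c t| ≤ Cc ∧ |d t| ≤ Cd := by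
      intro t ht
      have htm := hIccPL ht
      refine ⟨?_, ?_, ?_, ?_⟩
      · have := hCa t htm; rwa [Real.norm_eq_abs] at this
      · have := hCb t htm; rwa [Real.norm_eq_abs] at this
      · have := hCc t htm; rwa [Real.norm_eq_abs] at this
      · have := hCd t htm; rwa [Real.norm_eq_abs] at this
    have hPL : IsPicardLindelof v (⟨tc, left_mem_Icc.2 (by linarith)⟩ : Icc tc (tc + δ))
        (y tc) 1 0 Cf.toNNReal K.toNNReal := by
      constructor
      · -- lipschitz
        intro t ht
        apply LipschitzOnWith.of_dist_le_mul
        intro x hx x' hx'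
        rw [Real.dist_eq, Real.dist_eq]
        have hKc : (K.toNNReal : ℝ) = K := Real.coe_toNNReal _ hK0
        rw [hKc]
        obtain ⟨haa, hbb, hcc, _⟩ := hcoefbd t ht
        have hx1 : |x| ≤ N₀ := habsball x hx
        have hx2 : |x'| ≤ N₀ := habsball x' hx'
        have h1 : v t x - v t x' =
            -((x - x') * (a t * (x ^ 2 + x * x' + x' ^ 2) + b t * (x + x') + c t)) := by
          simp only [hvdef]; ring
        rw [h1, abs_neg, abs_mul]
        rw [mul_comm K _]
        apply mul_le_mul_of_nonneg_left _ (abs_nonneg _)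
        have e1 : |a t * (x ^ 2 + x * x' + x' ^ 2) + b t * (x + x') + c t| ≤
            |a t| * |x ^ 2 + x * x' + x' ^ 2| + |b t| * |x + x'| + |c t| := by
          calc _ ≤ |a t * (x ^ 2 + x * x' + x' ^ 2) + b t * (x + x')| + |c t| := abs_add_le _ _
            _ ≤ |a t * (x ^ 2 + x * x' + x' ^ 2)| + |b t * (x + x')| + |c t| := by
                linarith [abs_add_le (a t * (x ^ 2 + x * x' + x' ^ 2)) (b t * (x + x'))]
            _ = _ := by rw [abs_mul, abs_mul]
        have e2 : |x ^ 2 + x * x' + x' ^ 2| ≤ 3 * N₀ ^ 2 := by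
          have := abs_mul x x'
          calc |x ^ 2 + x * x' + x' ^ 2| ≤ |x ^ 2| + |x * x'| + |x' ^ 2| := by
                linarith [abs_add_le (x ^ 2 + x * x') (x' ^ 2), abs_add_le (x ^ 2) (x * x')]
            _ = |x| ^ 2 + |x| * |x'| + |x'| ^ 2 := by rw [abs_mul, abs_pow, abs_pow]
            _ ≤ 3 * N₀ ^ 2 := by nlinarith [abs_nonneg x, abs_nonneg x']
        have e3 : |x + x'| ≤ 2 * N₀ := by
          calc |x + x'| ≤ |x| + |x'| := abs_add_le _ _
            _ ≤ 2 * N₀ := by linarith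
        calc |a t * (x ^ 2 + x * x' + x' ^ 2) + b t * (x + x') + c t|
            ≤ |a t| * |x ^ 2 + x * x' + x' ^ 2| + |b t| * |x + x'| + |c t| := e1
          _ ≤ Ca * (3 * N₀ ^ 2) + Cb * (2 * N₀) + Cc := by
              have n1 : (0:ℝ) ≤ |a t| := abs_nonneg _
              have n2 : (0:ℝ) ≤ |b t| := abs_nonneg _
              have n3 : (0:ℝ) ≤ |x ^ 2 + x * x' + x' ^ 2| := abs_nonneg _
              have n4 : (0:ℝ) ≤ |x + x'| := abs_nonneg _
              nlinarith
          _ = K := by rw [hKdef]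
      · -- continuity in t
        intro x _
        have hsub : Icc tc (tc + δ) ⊆ eIco t₀ τ₀ := hIccPL.trans hIccR₀
        simp only [hvdef]
        apply ContinuousOn.neg
        apply ContinuousOn.add
        apply ContinuousOn.add
        apply ContinuousOn.add
        · exact (ha.mono hsub).mul continuousOn_const
        · exact (hb.mono hsub).mul continuousOn_const
        · exact (hc.mono hsub).mul continuousOn_const
        · exact hd.mono hsub
      · -- norm bound
        intro t ht x hx
        obtain ⟨haa, hbb, hcc, hdd⟩ := hcoefbd t ht
        have hx1 : |x| ≤ N₀ := habsball x hx
        rw [Real.norm_eq_abs]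
        simp only [hvdef]
        rw [abs_neg, Real.coe_toNNReal _ hCf0]
        have e1 : |a t * x ^ 3 + b t * x ^ 2 + c t * x + d t| ≤
            |a t| * |x| ^ 3 + |b t| * |x| ^ 2 + |c t| * |x| + |d t| := by
          calc _ ≤ |a t * x ^ 3 + b t * x ^ 2 + c t * x| + |d t| := abs_add_le _ _
            _ ≤ |a t * x ^ 3 + b t * x ^ 2| + |c t * x| + |d t| := by
                linarith [abs_add_le (a t * x ^ 3 + b t * x ^ 2) (c t * x)]
            _ ≤ |a t * x ^ 3| + |b t * x ^ 2| + |c t * x| + |d t| := by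
                linarith [abs_add_le (a t * x ^ 3) (b t * x ^ 2)]
            _ = _ := by
                rw [abs_mul, abs_mul, abs_mul, abs_pow, abs_pow]
        have hN₀0 : (0:ℝ) < N₀ := by linarith
        calc |a t * x ^ 3 + b t * x ^ 2 + c t * x + d t|
            ≤ |a t| * |x| ^ 3 + |b t| * |x| ^ 2 + |c t| * |x| + |d t| := e1
          _ ≤ Cf := by
              rw [hCfdef]
              have p1 : |x| ^ 3 ≤ N₀ ^ 3 := by
                apply pow_le_pow_left₀ (abs_nonneg _) hx1
              have p2 : |x| ^ 2 ≤ N₀ ^ 2 := by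
                apply pow_le_pow_left₀ (abs_nonneg _) hx1
              nlinarith [abs_nonneg (a t), abs_nonneg (b t), abs_nonneg (c t),
                abs_nonneg x, pow_nonneg (abs_nonneg x) 2, pow_nonneg (abs_nonneg x) 3]
      · -- C_mul_le_R
        simp only [Real.coe_toNNReal _ hCf0, NNReal.coe_one, NNReal.coe_zero, sub_zero]
        have h1 : tc + δ - tc = δ := by ring
        have h2 : tc - tc = 0 := by ring
        rw [h1, h2, max_eq_left hδpos.le]
        have h3 : δ ≤ 1 / (Cf + 1) := min_le_left _ _
        have h4 : Cf * δ ≤ Cf * (1 / (Cf + 1)) := mul_le_mul_of_nonneg_left h3 hCf0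
        have h5 : Cf * (1 / (Cf + 1)) ≤ 1 := by
          rw [mul_one_div, div_le_one (by linarith)]
          linarith
        exact le_trans h4 h5
    obtain ⟨ζ, hζ0 : ζ tc = y tc, hζd⟩ := hPL.exists_eq_forall_mem_Icc_hasDerivWithinAt₀
    have hζcont : ContinuousOn ζ (Icc tc (tc + δ)) :=
      fun t ht => (hζd t ht).continuousWithinAt
    have hζD : ∀ t ∈ Ioo tc (tc + δ), HasDerivAt ζ (v t (ζ t)) t :=
      fun t ht => (hζd t (Ioo_subset_Icc_self ht)).hasDerivAt (Icc_mem_nhds ht.1 ht.2)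
    -- uniqueness: y = ζ on [tc, r)
    have hS₁' : eIco t₀ t₁ = Ico t₀ r := hS₁eq
    have hycr : ContinuousOn y (Ico t₀ r) := by rw [← hS₁'] ; exact hycont
    have hyeq : ∀ s, tc ≤ s → s < r → y s = ζ s := by
      intro s hsc hsr
      have hsδ : s < tc + δ := by linarith
      set Q2 : ℝ → ℝ := fun t =>
        a t * (y t ^ 2 + y t * ζ t + ζ t ^ 2) + b t * (y t + ζ t) + c t with hQ2def
      have hIccs : Icc tc s ⊆ Icc tc (tc + δ) := Icc_subset_Icc le_rfl (by linarith)
      have hIccsS₁ : Icc tc s ⊆ Ico t₀ r :=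
        fun x hx => ⟨le_trans htc0.le hx.1, lt_of_le_of_lt hx.2 hsr⟩
      have hIccsD : Icc tc s ⊆ eIco t₀ τ₀ := (hIccs.trans hIccPL).trans hIccR₀
      have hQ2c : ContinuousOn Q2 (Icc tc s) := by
        apply ContinuousOn.add
        apply ContinuousOn.add
        · refine (ha.mono hIccsD).mul ?_
          exact (((hycr.mono hIccsS₁).pow 2).add
            ((hycr.mono hIccsS₁).mul (hζcont.mono hIccs))).add ((hζcont.mono hIccs).pow 2)
        · exact (hb.mono hIccsD).mul ((hycr.mono hIccsS₁).add (hζcont.mono hIccs))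
        · exact hc.mono hIccsD
      set MM : ℝ → ℝ := fun t => Real.exp (∫ u in tc..t, Q2 u) with hMMdef
      have hMMc : ContinuousOn MM (Icc tc s) :=
        Real.continuous_exp.comp_continuousOn (myPrimCont hsc hQ2c.integrableOn_Icc)
      have hMMpos : ∀ t, 0 < MM t := fun t => Real.exp_pos _
      set F : ℝ → ℝ := fun t => MM t * (y t - ζ t) with hFdef
      have hFc : ContinuousOn F (Icc tc s) :=
        hMMc.mul ((hycr.mono hIccsS₁).sub (hζcont.mono hIccs))
      have hsS₁ : s ∈ eIco t₀ t₁ := by rw [hS₁']; exact ⟨by linarith, hsr⟩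
      have hFd : ∀ t ∈ Ioo tc s, HasDerivAt F ((fun _ => (0:ℝ)) t) t := by
        intro t ht
        have hty : HasDerivAt y (abelRHS a b c d y t) t :=
          hyD s hsS₁ t ⟨by linarith [ht.1], ht.2⟩
        have htζ : HasDerivAt ζ (v t (ζ t)) t := hζD t ⟨ht.1, by linarith [ht.2]⟩
        have hMMd : HasDerivAt MM (Q2 t * MM t) t := by
          have := (myPrim hQ2c t ht).exp
          simpa [hMMdef, mul_comm] using this
        have hprod := hMMd.mul (hty.sub htζ)
        have hval : Q2 t * MM t * (y t - ζ t) + MM t * (abelRHS a b c d y t - v t (ζ t))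
            = 0 := by
          simp only [abelRHS, hQ2def, hvdef]; ring
        rw [Pi.sub_apply, hval] at hprod
        exact hprod
      have hid := myFTC hFc continuousOn_const hFd s ⟨hsc, le_rfl⟩
      simp only [intervalIntegral.integral_const, smul_zero, add_zero] at hid
      have hFtc : F tc = 0 := by
        simp only [hFdef, hζ0]
        ring
      rw [hFtc] at hid
      have : y s - ζ s = 0 := by
        rcases mul_eq_zero.1 hid with h | h
        · exact absurd h (hMMpos s).ne'
        · exact h
      linarith
    -- construct the extension z and contradict noncontinuability
    apply hnc
    refine ⟨((tc + δ : ℝ) : EReal), fun t => if t < r then y t else ζ t, ?_, ?_, ?_, ?_⟩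
    · rw [← hrE]
      exact EReal.coe_lt_coe_iff.2 hrtcδ
    · exact le_trans (EReal.coe_le_coe_iff.2 htcδR₀) hR₀τ.le
    · -- solution property on eIco t₀ (tc+δ)
      intro t ht
      have hS₂eq : eIco t₀ ((tc + δ : ℝ) : EReal) = Ico t₀ (tc + δ) := eIco_coe _ _
      rw [hS₂eq] at ht ⊢
      set z : ℝ → ℝ := fun t => if t < r then y t else ζ t with hzdef
      rcases lt_or_ge t r with htr | htr
      · -- on [t₀, r)
        have htS₁ : t ∈ eIco t₀ t₁ := by rw [hS₁']; exact ⟨ht.1, htr⟩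
        have hd1 : HasDerivWithinAt y (abelRHS a b c d y t) (eIco t₀ t₁) t := hy t htS₁
        have hmem : eIco t₀ t₁ ∈ nhdsWithin t (Ico t₀ (tc + δ)) := by
          apply Filter.mem_of_superset
            (Filter.inter_mem self_mem_nhdsWithin
              (mem_nhdsWithin_of_mem_nhds (Iio_mem_nhds htr)))
          rintro x ⟨hx1, hx2⟩
          rw [hS₁']
          exact ⟨hx1.1, hx2⟩
        have hd2 : HasDerivWithinAt y (abelRHS a b c d y t) (Ico t₀ (tc + δ)) t :=
          hd1.mono_of_mem_nhdsWithin hmem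
        have heqz : z =ᶠ[nhdsWithin t (Ico t₀ (tc + δ))] y := by
          apply Filter.eventually_of_mem
            (mem_nhdsWithin_of_mem_nhds (Iio_mem_nhds htr))
          intro x hx
          rw [mem_Iio] at hx
          simp only [hzdef, if_pos hx]
        have hzt : z t = y t := if_pos htr
        have hval : abelRHS a b c d z t = abelRHS a b c d y t := by
          simp only [abelRHS, hzt]
        rw [hval]
        exact hd2.congr_of_eventuallyEq heqz hzt
      · -- on [r, tc+δ)
        have hztζ : z t = ζ t := if_neg (not_lt.2 htr)
        have htct : tc < t := lt_of_lt_of_le htcr htr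
        have htIcc : t ∈ Icc tc (tc + δ) := ⟨htct.le, (ht.2).le⟩
        have hd1 : HasDerivWithinAt ζ (v t (ζ t)) (Icc tc (tc + δ)) t := hζd t htIcc
        have hmem : Icc tc (tc + δ) ∈ nhdsWithin t (Ico t₀ (tc + δ)) := by
          apply Filter.mem_of_superset
            (Filter.inter_mem self_mem_nhdsWithin
              (mem_nhdsWithin_of_mem_nhds (Ioi_mem_nhds htct)))
          rintro x ⟨hx1, hx2⟩
          exact ⟨le_of_lt hx2, hx1.2.le⟩
        have hd2 : HasDerivWithinAt ζ (v t (ζ t)) (Ico t₀ (tc + δ)) t :=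
          hd1.mono_of_mem_nhdsWithin hmem
        have heqz : z =ᶠ[nhdsWithin t (Ico t₀ (tc + δ))] ζ := by
          apply Filter.eventually_of_mem
            (mem_nhdsWithin_of_mem_nhds (Ioi_mem_nhds htct))
          intro x hx
          rcases lt_or_ge x r with hxr | hxr
          · simp only [hzdef, if_pos hxr]
            exact hyeq x (le_of_lt hx) hxr
          · simp only [hzdef, if_neg (not_lt.2 hxr)]
        have hval : abelRHS a b c d z t = v t (ζ t) := by
          simp only [abelRHS, hztζ, hvdef]
        rw [hval]
        exact hd2.congr_of_eventuallyEq heqz hztζ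
    · -- EqOn z y on eIco t₀ t₁
      intro x hx
      rw [hS₁'] at hx
      simp only [if_pos hx.2]
  -- final conclusions
  subst hteq
  refine ⟨rfl, ?_, ?_, ?_⟩
  · intro t ht
    exact (comp t ht t ⟨ht.1, le_rfl⟩).1
  · intro h t ht
    exact (comp t ht t ⟨ht.1, le_rfl⟩).2.1 h
  · intro h t ht
    exact (comp t ht t ⟨ht.1, le_rfl⟩).2.2 h
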